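/- (Lemma A.2.) Let d_m > 0 and d_n > 0 be real numbers, and let h: (0,∞) → (0,∞) be strictly increasing with h(x) → 0 as x → 0+. Suppose that for all z_m > 0 and z_n > 0, (d_m + d_n) · h((d_m z_m + d_n z_n)/(d_m + d_n)) = d_m · h(z_m) + d_n · h(z_n). Then there exists r > 0 such that h(z) = z/r for all z > 0. -/

import Mathlib

open Set Filter

section Aux

variable (l m : ℝ) (h : ℝ → ℝ)

/-- small values lemma -/
lemma hsmall_aux (hlim : Filter.Tendsto h (nhdsWithin 0 (Set.Ioi (0 : ℝ))) (nhds 0)) :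
    ∀ δ > (0:ℝ), ∃ w > (0:ℝ), h w < δ := by
  intro δ hδ
  have h1 : ∀ᶠ w in nhdsWithin 0 (Set.Ioi (0:ℝ)), h w < δ :=
    hlim.eventually (gt_mem_nhds hδ)
  have h2 : ∀ᶠ w in nhdsWithin 0 (Set.Ioi (0:ℝ)), w ∈ Set.Ioi (0:ℝ) :=
    eventually_mem_nhdsWithin
  obtain ⟨w, hw1, hw2⟩ := (h1.and h2).exists
  exact ⟨w, hw2, hw1⟩

/-- lower bound: `l * h (p/l)` is a lower bound for `h` on `Ioi p`. -/
lemma lb_aux (hl : 0 < l) (hm : 0 < m)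
    (hpos : ∀ x > (0 : ℝ), 0 < h x)
    (heq : ∀ a > (0:ℝ), ∀ b > (0:ℝ), h (l*a + m*b) = l * h a + m * h b) :
    ∀ p > (0:ℝ), ∀ x > p, l * h (p / l) ≤ h x := by
  intro p hp x hx
  have hw : (x - p)/m > 0 := div_pos (by linarith) hm
  have key := heq (p/l) (div_pos hp hl) ((x-p)/m) hw
  have harg : l * (p/l) + m * ((x-p)/m) = x := by field_simp; ring
  rw [harg] at key
  have := hpos ((x-p)/m) hw
  nlinarith

/-- approximation: values just above `p` get close to `l * h (p/l)`. -/
lemma approx_aux (hl : 0 < l) (hm : 0 < m)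
    (hlim : Filter.Tendsto h (nhdsWithin 0 (Set.Ioi (0 : ℝ))) (nhds 0))
    (heq : ∀ a > (0:ℝ), ∀ b > (0:ℝ), h (l*a + m*b) = l * h a + m * h b) :
    ∀ p > (0:ℝ), ∀ ε > (0:ℝ), ∃ x > p, h x < l * h (p / l) + ε := by
  intro p hp ε hε
  obtain ⟨w, hw, hwε⟩ := hsmall_aux h hlim (ε/m) (div_pos hε hm)
  refine ⟨p + m * w, by nlinarith, ?_⟩
  have key := heq (p/l) (div_pos hp hl) w hw
  have harg : l * (p/l) + m * w = p + m * w := by field_simp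
  rw [harg] at key
  rw [key]
  have : m * h w < m * (ε/m) := by exact (mul_lt_mul_iff_right₀ hm).2 hwε
  have hme : m * (ε/m) = ε := by field_simp
  linarith

/-- h p ≤ l * h (p/l) -/
lemma jnonneg_aux (hl : 0 < l) (hm : 0 < m)
    (hmono : StrictMonoOn h (Set.Ioi (0 : ℝ)))
    (hlim : Filter.Tendsto h (nhdsWithin 0 (Set.Ioi (0 : ℝ))) (nhds 0))
    (heq : ∀ a > (0:ℝ), ∀ b > (0:ℝ), h (l*a + m*b) = l * h a + m * h b) :
    ∀ p > (0:ℝ), h p ≤ l * h (p / l) := by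
  intro p hp
  by_contra hcon
  push_neg at hcon
  obtain ⟨x, hx, hxlt⟩ := approx_aux l m h hl hm hlim heq p hp (h p - l * h (p/l)) (by linarith)
  have : h p < h x := hmono (Set.mem_Ioi.2 hp) (Set.mem_Ioi.2 (lt_trans hp hx)) hx
  linarith

end Aux

/-- Lemma A.2: if a positive, strictly increasing `h` on `(0,∞)` with
`h → 0` at `0⁺` satisfies the weighted Jensen equality
`(dm + dn) · h((dm·zm + dn·zn)/(dm + dn)) = dm·h(zm) + dn·h(zn)`
for all positive `zm, zn`, then `h(z) = z / r` for some `r > 0`. -/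
theorem jensen_equality_implies_linear
    (dm dn : ℝ) (hdm : 0 < dm) (hdn : 0 < dn)
    (h : ℝ → ℝ)
    (hpos : ∀ x > (0 : ℝ), 0 < h x)
    (hmono : StrictMonoOn h (Set.Ioi (0 : ℝ)))
    (hlim : Filter.Tendsto h (nhdsWithin 0 (Set.Ioi (0 : ℝ))) (nhds 0))
    (heq : ∀ zm > (0 : ℝ), ∀ zn > (0 : ℝ),
      (dm + dn) * h ((dm * zm + dn * zn) / (dm + dn)) = dm * h zm + dn * h zn) :
    ∃ r > (0 : ℝ), ∀ z > (0 : ℝ), h z = z / r := by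
  have hs : (0:ℝ) < dm + dn := by linarith
  set l : ℝ := dm / (dm + dn) with hl_def
  set m : ℝ := dn / (dm + dn) with hm_def
  have hl : 0 < l := div_pos hdm hs
  have hm : 0 < m := div_pos hdn hs
  have hlm : l + m = 1 := by rw [hl_def, hm_def]; field_simp
  -- normalized functional equation
  have heq' : ∀ a > (0:ℝ), ∀ b > (0:ℝ), h (l*a + m*b) = l * h a + m * h b := by
    intro a ha b hb
    have key := heq a ha b hb
    have harg : (dm * a + dn * b) / (dm + dn) = l*a + m*b := by
      rw [hl_def, hm_def]; ring
    rw [harg] at key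
    have : h (l*a+m*b) = (dm * h a + dn * h b) / (dm + dn) := by
      field_simp at key ⊢; linarith
    rw [this, hl_def, hm_def]; ring
  have heq'' : ∀ a > (0:ℝ), ∀ b > (0:ℝ), h (m*a + l*b) = m * h a + l * h b := by
    intro a ha b hb
    have := heq' b hb a ha
    rw [add_comm (l*b) (m*a)] at this
    linarith
  -- countable discontinuities: extend h to a monotone function on ℝ
  set g : ℝ → ℝ := fun x => if 0 < x then h x else 0 with hg_def
  have hg_mono : Monotone g := by
    intro x y hxy
    show (if 0 < x then h x else 0) ≤ (if 0 < y then h y else 0)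
    by_cases hx : 0 < x
    · have hy : 0 < y := lt_of_lt_of_le hx hxy
      rw [if_pos hx, if_pos hy]
      rcases eq_or_lt_of_le hxy with rfl | hlt
      · exact le_rfl
      · exact (hmono hx hy hlt).le
    · by_cases hy : 0 < y
      · rw [if_neg hx, if_pos hy]
        exact (hpos y hy).le
      · rw [if_neg hx, if_neg hy]
  -- at any continuity point z of g with z > 0, the right jump vanishes
  have hcontpt : ∀ δ > (0:ℝ), ∃ z, z ∈ Set.Ioo 0 δ ∧ l * h (z / l) ≤ h z := by
    intro δ hδ
    have hcard : ¬ (Set.Ioo (0:ℝ) δ).Countable := by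
      intro hC
      have h1 : (Cardinal.mk (Set.Ioo (0:ℝ) δ)) ≤ Cardinal.aleph0 :=
        Cardinal.le_aleph0_iff_set_countable.2 hC
      rw [Cardinal.mk_Ioo_real hδ] at h1
      exact absurd h1 (not_le.2 Cardinal.aleph0_lt_continuum)
    have hsub : ¬ (Set.Ioo (0:ℝ) δ ⊆ {x | ¬ContinuousAt g x}) := by
      intro hsub
      exact hcard ((hg_mono.countable_not_continuousAt).mono hsub)
    rw [Set.not_subset] at hsub
    obtain ⟨z, hz, hzc⟩ := hsub
    simp only [Set.mem_setOf_eq, not_not] at hzc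
    refine ⟨z, hz, ?_⟩
    -- continuity at z gives points x > z with h x close to h z
    by_contra hcon
    push_neg at hcon
    obtain ⟨ε, hε_def, hεpos⟩ : ∃ ε : ℝ, ε = l * h (z / l) - h z ∧ 0 < ε :=
      ⟨l * h (z / l) - h z, rfl, by linarith⟩
    have hev : ∀ᶠ x in nhds z, g x < g z + ε := by
      have := hzc.tendsto
      exact this.eventually (gt_mem_nhds (lt_add_of_pos_right _ hεpos))
    have hne : (nhdsWithin z (Set.Ioi z)).NeBot := nhdsGT_neBot z
    have hev' : ∀ᶠ x in nhdsWithin z (Set.Ioi z), g x < g z + ε :=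
      nhdsWithin_le_nhds hev
    obtain ⟨x, hx1, hx2⟩ := (hev'.and eventually_mem_nhdsWithin).exists
    have hzpos : 0 < z := hz.1
    have hxpos : 0 < x := lt_trans hzpos hx2
    have hgx : g x = h x := if_pos hxpos
    have hgz : g z = h z := if_pos hzpos
    rw [hgx, hgz] at hx1
    have hlb := lb_aux l m h hl hm hpos heq' z hzpos x hx2
    rw [hε_def] at hx1
    linarith
  -- no right jump anywhere: h p = l * h (p/l) for all p > 0
  have hJzero : ∀ p > (0:ℝ), h p = l * h (p / l) := by
    intro p hp
    have hle := jnonneg_aux l m h hl hm hmono hlim heq' p hp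
    refine le_antisymm hle ?_
    -- transfer: pick a continuity point z* < p/m
    obtain ⟨z, hz, hzJ⟩ := hcontpt (p / m) (div_pos hp hm)
    have hzpos : 0 < z := hz.1
    have ha : 0 < (p - m * z) / l := by
      have : m * z < p := by
        have := hz.2
        calc m * z < m * (p/m) := (mul_lt_mul_iff_right₀ hm).2 this
        _ = p := by field_simp
      exact div_pos (by linarith) hl
    set a := (p - m * z) / l with ha_def
    have harg : l * a + m * z = p := by rw [ha_def]; field_simp; ring
    -- l * h (p/l) ≤ h (l*a + m*zz) for any zz > z, and these approach h a * l + m * (l * h(z/l))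
    -- show: l * h (p/l) ≤ l * h a + m * (l * h (z/l)) ≤ l*h a + m*h z = h p
    have key : ∀ ε > (0:ℝ), l * h (p/l) ≤ l * h a + m * (l * h (z/l)) + ε := by
      intro ε hε
      obtain ⟨zz, hzz, hzzlt⟩ := approx_aux l m h hl hm hlim heq' z hzpos (ε/m) (div_pos hε hm)
      have hzzpos : 0 < zz := lt_trans hzpos hzz
      have hgt : l * a + m * zz > p := by
        rw [← harg]
        have : m * z < m * zz := (mul_lt_mul_iff_right₀ hm).2 hzz
        linarith
      have h1 := lb_aux l m h hl hm hpos heq' p hp (l*a + m*zz) hgt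
      rw [heq' a ha zz hzzpos] at h1
      have h2 : m * h zz < m * (l * h (z/l) + ε/m) := (mul_lt_mul_iff_right₀ hm).2 hzzlt
      have : m * (ε/m) = ε := by field_simp
      nlinarith
    have key2 : l * h (p/l) ≤ l * h a + m * (l * h (z/l)) := by
      by_contra hcon
      push_neg at hcon
      have := key ((l * h (p/l) - (l * h a + m * (l * h (z/l))))/2) (by linarith)
      linarith
    have hhz : l * h (z/l) ≤ h z := hzJ
    have hpval : h p = l * h a + m * h z := by rw [← harg]; exact heq' a ha z hzpos
    nlinarith
  -- scaling: h (l*z) = l * h z and h (m*z) = m * h z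
  have hscale_l : ∀ z > (0:ℝ), h (l * z) = l * h z := by
    intro z hz
    have := hJzero (l*z) (mul_pos hl hz)
    rw [this]
    congr 2
    field_simp
  have hscale_m : ∀ z > (0:ℝ), h (m * z) = m * h z := by
    intro z hz
    -- m * h (p/m) ≤ inf-type bound ≤ h p and h p ≤ m * h (p/m)
    set p := m * z with hp_def
    have hp : 0 < p := mul_pos hm hz
    have hpm : p / m = z := by rw [hp_def]; field_simp
    have h1 : h p ≤ m * h (p/m) := jnonneg_aux m l h hm hl hmono hlim heq'' p hp
    have h2 : m * h (p/m) ≤ h p := by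
      -- m * h(p/m) is a lower bound on Ioi p; approx with l shows inf = l h(p/l) = h p
      have hle : ∀ ε > (0:ℝ), m * h (p/m) ≤ h p + ε := by
        intro ε hε
        obtain ⟨x, hx, hxlt⟩ := approx_aux l m h hl hm hlim heq' p hp ε hε
        have := lb_aux m l h hm hl hpos heq'' p hp x hx
        have := hJzero p hp
        linarith
      by_contra hcon
      push_neg at hcon
      have := hle ((m * h (p/m) - h p)/2) (by linarith)
      linarith
    rw [hpm] at h1 h2
    exact le_antisymm h1 h2
  -- additivity on positives
  have hadd : ∀ a > (0:ℝ), ∀ b > (0:ℝ), h (a + b) = h a + h b := by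
    intro a ha b hb
    have ha' : 0 < a / l := div_pos ha hl
    have hb' : 0 < b / m := div_pos hb hm
    have key := heq' (a/l) ha' (b/m) hb'
    have e1 : l * (a/l) = a := by field_simp
    have e2 : m * (b/m) = b := by field_simp
    rw [e1, e2] at key
    rw [key, ← e1, ← e2, hscale_l (a/l) ha', hscale_m (b/m) hb', e1, e2]
  -- nat scaling
  have hnat : ∀ n : ℕ, ∀ z > (0:ℝ), h ((n+1) * z) = (n+1) * h z := by
    intro n
    induction n with
    | zero => intro z hz; norm_num
    | succ k ih =>
      intro z hz
      have e : ((k:ℝ)+1+1) * z = ((k:ℝ)+1) * z + z := by ring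
      have hkz : (0:ℝ) < ((k:ℝ)+1) * z := by positivity
      push_cast
      rw [e, hadd (((k:ℝ)+1)*z) hkz z hz, ih z hz]
      ring
  -- rational values: h q = q * h 1
  have hrat : ∀ q : ℚ, 0 < q → h (q:ℝ) = (q:ℝ) * h 1 := by
    intro q hq
    have hnum : 0 < q.num := Rat.num_pos.2 hq
    obtain ⟨a, ha⟩ : ∃ a : ℕ, q.num = (a:ℤ) + 1 :=
      ⟨(q.num - 1).toNat, by omega⟩
    obtain ⟨b, hb⟩ : ∃ b : ℕ, q.den = b + 1 :=
      ⟨q.den - 1, by have := q.den_pos; omega⟩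
    have hqpos : (0:ℝ) < (q:ℝ) := by exact_mod_cast hq
    have key1 : h (((b:ℝ)+1) * (q:ℝ)) = ((b:ℝ)+1) * h (q:ℝ) := hnat b (q:ℝ) hqpos
    have key2 : h (((a:ℝ)+1) * 1) = ((a:ℝ)+1) * h 1 := hnat a 1 one_pos
    have hqe : ((b:ℝ)+1) * (q:ℝ) = ((a:ℝ)+1) * 1 := by
      have hden : ((q.den:ℝ)) * (q:ℝ) = (q.num:ℝ) := by
        rw [Rat.cast_def]
        field_simp
      rw [mul_one]
      rw [hb] at hden; rw [ha] at hden
      push_cast at hden ⊢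
      linarith
    rw [hqe, key2] at key1
    have hbpos : (0:ℝ) < (b:ℝ)+1 := by positivity
    have : h (q:ℝ) = (((a:ℝ)+1)/((b:ℝ)+1)) * h 1 := by
      field_simp
      linarith
    rw [this]
    congr 1
    have := Rat.num_div_den q
    rw [← this, ha, hb]
    push_cast
    ring
  -- squeeze: h z = z * h 1
  have h1pos : 0 < h 1 := hpos 1 one_pos
  have hlin : ∀ z > (0:ℝ), h z = z * h 1 := by
    intro z hz
    by_contra hcon
    rcases lt_or_gt_of_ne hcon with hlt | hgt
    · -- h z < z * h 1 : pick rational q with h z / h 1 < q < z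
      have hq0 : 0 < h z / h 1 := div_pos (hpos z hz) h1pos
      have hqlt : h z / h 1 < z := (div_lt_iff₀ h1pos).2 (by linarith)
      obtain ⟨q, hq1, hq2⟩ := exists_rat_btwn hqlt
      have hqpos : 0 < q := by
        have : (0:ℝ) < (q:ℝ) := lt_trans hq0 hq1
        exact_mod_cast this
      have hmq : h (q:ℝ) < h z := by
        have hqr : (0:ℝ) < (q:ℝ) := by exact_mod_cast hqpos
        exact hmono (Set.mem_Ioi.2 hqr) (Set.mem_Ioi.2 hz) hq2
      rw [hrat q hqpos] at hmq
      have : h z < (q:ℝ) * h 1 := by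
        rw [div_lt_iff₀ h1pos] at hq1; linarith
      linarith
    · -- z * h 1 < h z : pick rational q with z < q < h z / h 1
      have hqlt : z < h z / h 1 := (lt_div_iff₀ h1pos).2 (by linarith)
      obtain ⟨q, hq1, hq2⟩ := exists_rat_btwn hqlt
      have hqpos : 0 < q := by
        have : (0:ℝ) < (q:ℝ) := lt_trans hz hq1
        exact_mod_cast this
      have hmq : h z < h (q:ℝ) := by
        have hqr : (0:ℝ) < (q:ℝ) := lt_trans hz hq1
        exact hmono (Set.mem_Ioi.2 hz) (Set.mem_Ioi.2 hqr) hq1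
      rw [hrat q hqpos] at hmq
      have : (q:ℝ) * h 1 < h z := by
        rw [lt_div_iff₀ h1pos] at hq2
        linarith
      linarith
  refine ⟨1 / h 1, by positivity, ?_⟩
  intro z hz
  rw [hlin z hz]
  field_simp
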